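/- Let A = [a_{ij}] and B = [b_{ij}] be n × n positive definite complex matrices, and let 2 ≤ p ≤ n. Then det(A_p ∘ B_p)/det(A_{p−1} ∘ B_{p−1}) + det(A_p B_p)/det(A_{p−1} B_{p−1}) ≥ a_{pp} · det B_p / det B_{p−1} + b_{pp} · det A_p / det A_{p−1}, where A_p = [a_{ij}]_{i,j=1}^{p} and B_p = [b_{ij}]_{i,j=1}^{p} are the p × p leading principal submatrices, all quantities are positive reals, and the inequality is of real numbers. -/

import Mathlib

open Matrix ComplexOrder

/-- The `p × p` leading principal submatrix `A_p` (for `p ≤ n`) of an `n × n` matrix. -/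
def leadSub {n : ℕ} (A : Matrix (Fin n) (Fin n) ℂ) (p : ℕ) (h : p ≤ n) :
    Matrix (Fin p) (Fin p) ℂ :=
  A.submatrix (Fin.castLE h) (Fin.castLE h)


variable {m n : Type*} [Fintype m] [Fintype n] [DecidableEq n]

namespace Matrix.PosSemidef

open scoped MatrixOrder in
noncomputable def sqrt {B : Matrix n n ℂ} (_ : B.PosSemidef) : Matrix n n ℂ := CFC.sqrt B

open scoped MatrixOrder in
lemma sqrt_mul_self {B : Matrix n n ℂ} (hB : B.PosSemidef) : hB.sqrt * hB.sqrt = B :=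
  CFC.sqrt_mul_sqrt_self B hB.nonneg

open scoped MatrixOrder in
lemma posSemidef_sqrt {B : Matrix n n ℂ} (hB : B.PosSemidef) : hB.sqrt.PosSemidef :=
  (CFC.sqrt_nonneg B).posSemidef

end Matrix.PosSemidef

lemma hadamard_quad (A B : Matrix n n ℂ) (hB : B.PosSemidef) (x : n → ℂ) :
    star x ⬝ᵥ (Matrix.hadamard A B) *ᵥ x
      = ∑ k, star (fun i => hB.sqrt k i * x i) ⬝ᵥ A *ᵥ (fun i => hB.sqrt k i * x i) := by
  have hB' : ∀ i j, B i j = ∑ k, star (hB.sqrt k i) * hB.sqrt k j := by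
    intro i j
    conv_lhs => rw [← hB.sqrt_mul_self, Matrix.mul_apply]
    exact Finset.sum_congr rfl fun k _ => by
      rw [hB.posSemidef_sqrt.isHermitian.apply]
  simp only [dotProduct, mulVec, Matrix.hadamard_apply, hB', Finset.mul_sum, Finset.sum_mul,
    Pi.star_apply, star_mul']
  have sum3 : ∀ (f : n → n → n → ℂ), ∑ i, ∑ j, ∑ k, f i j k = ∑ k, ∑ i, ∑ j, f i j k := by
    intro f
    calc ∑ i, ∑ j, ∑ k, f i j k = ∑ i, ∑ k, ∑ j, f i j k :=
          Finset.sum_congr rfl fun i _ => Finset.sum_comm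
      _ = ∑ k, ∑ i, ∑ j, f i j k := Finset.sum_comm
  rw [sum3]
  refine Finset.sum_congr rfl fun k _ => Finset.sum_congr rfl fun i _ =>
    Finset.sum_congr rfl fun j _ => by ring

lemma isHermitian_hadamard {A B : Matrix n n ℂ} (hA : A.IsHermitian) (hB : B.IsHermitian) :
    (Matrix.hadamard A B).IsHermitian := by
  ext i j
  simp only [conjTranspose_apply, Matrix.hadamard_apply, star_mul', hA.apply, hB.apply]

lemma posSemidef_hadamardC {A B : Matrix n n ℂ} (hA : A.PosSemidef) (hB : B.PosSemidef) :
    (Matrix.hadamard A B).PosSemidef := by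
  refine PosSemidef.of_dotProduct_mulVec_nonneg (isHermitian_hadamard hA.1 hB.1) fun x => ?_
  rw [hadamard_quad A B hB x]
  exact Finset.sum_nonneg fun k _ => hA.dotProduct_mulVec_nonneg _

lemma posDef_hadamardC {A B : Matrix n n ℂ} (hA : A.PosDef) (hB : B.PosDef) :
    (Matrix.hadamard A B).PosDef := by
  refine PosDef.of_dotProduct_mulVec_pos (isHermitian_hadamard hA.1 hB.1) fun x hx => ?_
  rw [hadamard_quad A B hB.posSemidef x]
  obtain ⟨i, hi⟩ := Function.ne_iff.mp hx
  have hBii : (0:ℂ) < B i i := by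
    have := hB.dotProduct_mulVec_pos (x := Pi.single i 1) (by simp [Function.ne_iff])
    simpa [dotProduct, mulVec, Pi.single_apply] using this
  have hS : ∃ k, hB.posSemidef.sqrt k i ≠ 0 := by
    by_contra h
    push_neg at h
    have : B i i = 0 := by
      have hB' : B i i = ∑ k, star (hB.posSemidef.sqrt k i) * hB.posSemidef.sqrt k i := by
        conv_lhs => rw [← hB.posSemidef.sqrt_mul_self, Matrix.mul_apply]
        exact Finset.sum_congr rfl fun k _ => by
          rw [hB.posSemidef.posSemidef_sqrt.isHermitian.apply]
      rw [hB']
      exact Finset.sum_eq_zero fun k _ => by rw [h k, mul_zero]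
    rw [this] at hBii; exact lt_irrefl _ hBii
  obtain ⟨k, hk⟩ := hS
  refine Finset.sum_pos' (fun l _ => hA.posSemidef.dotProduct_mulVec_nonneg _) ⟨k, Finset.mem_univ k, ?_⟩
  exact hA.dotProduct_mulVec_pos (Function.ne_iff.mpr ⟨i, by simpa using mul_ne_zero hk hi⟩)

lemma posDef_submatrixC {A : Matrix n n ℂ} (hA : A.PosDef) {m : Type*} [Fintype m]
    [DecidableEq m] (e : m → n) (he : Function.Injective e) :
    (A.submatrix e e).PosDef := by
  refine PosDef.of_dotProduct_mulVec_pos (hA.1.submatrix e) fun x hx => ?_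
  set y : n → ℂ := Function.extend e x 0 with hy
  have hye : ∀ i, y (e i) = x i := fun i => he.extend_apply x (0 : n → ℂ) i
  have hy0' : ∀ j, j ∉ Finset.univ.image e → y j = 0 := by
    intro j hj
    refine Function.extend_apply' x (0 : n → ℂ) j ?_
    rintro ⟨a, rfl⟩
    exact hj (Finset.mem_image_of_mem e (Finset.mem_univ a))
  have hy0 : y ≠ 0 := fun h => hx (funext fun i => by rw [← hye i, h]; rfl)
  have inner : ∀ jj : n, ∑ j', A jj j' * y j' = ∑ i', A jj (e i') * x i' := by
    intro jj
    rw [← Finset.sum_subset (Finset.subset_univ (Finset.univ.image e))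
      (fun j _ hj => by rw [hy0' j hj, mul_zero]),
      Finset.sum_image (fun a _ b _ h => he h)]
    exact Finset.sum_congr rfl fun i _ => by rw [hye]
  have quad : star x ⬝ᵥ (A.submatrix e e) *ᵥ x = star y ⬝ᵥ A *ᵥ y := by
    simp only [dotProduct, mulVec, submatrix_apply, Pi.star_apply]
    rw [← Finset.sum_subset (Finset.subset_univ (Finset.univ.image e))
      (fun j _ hj => by rw [hy0' j hj, star_zero, zero_mul]),
      Finset.sum_image (fun a _ b _ h => he h)]
    exact Finset.sum_congr rfl fun i _ => by rw [hye, inner]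
  rw [quad]
  exact hA.dotProduct_mulVec_pos hy0

section Kernel

variable {q : ℕ}

private def blk (C : Matrix (Fin (q+1)) (Fin (q+1)) ℂ) : Matrix (Fin q) (Fin q) ℂ :=
  C.submatrix Fin.castSucc Fin.castSucc

private def colv (C : Matrix (Fin (q+1)) (Fin (q+1)) ℂ) : Matrix (Fin q) (Fin 1) ℂ :=
  of fun i _ => C i.castSucc (Fin.last q)

lemma he_l (i : Fin q) : finSumFinEquiv (Sum.inl i : Fin q ⊕ Fin 1) = Fin.castSucc i := by
  ext; simp

lemma he_r (i : Fin 1) : finSumFinEquiv (Sum.inr i : Fin q ⊕ Fin 1) = Fin.last q := by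
  ext; simp [Fin.last]

lemma submatrix_e {C : Matrix (Fin (q+1)) (Fin (q+1)) ℂ} (hC : C.IsHermitian) :
    C.submatrix finSumFinEquiv finSumFinEquiv
      = fromBlocks (blk C) (colv C) (colv C)ᴴ (of fun _ _ => C (Fin.last q) (Fin.last q)) := by
  ext i j
  rcases i with i | i <;> rcases j with j | j
  · rw [submatrix_apply, he_l, he_l]; rfl
  · rw [submatrix_apply, he_l, he_r]; rfl
  · rw [submatrix_apply, he_r, he_l]
    simp only [fromBlocks_apply₂₁, conjTranspose_apply, colv, of_apply]
    exact (hC.apply _ _).symm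
  · rw [submatrix_apply, he_r, he_r]; rfl

lemma posdef_blk {C : Matrix (Fin (q+1)) (Fin (q+1)) ℂ} (hC : C.PosDef) : (blk C).PosDef :=
  posDef_submatrixC hC _ (Fin.castSucc_injective q)

lemma det_decomp {C : Matrix (Fin (q+1)) (Fin (q+1)) ℂ} (hC : C.PosDef) :
    C.det = (blk C).det
      * (C (Fin.last q) (Fin.last q) - ((colv C)ᴴ * (blk C)⁻¹ * (colv C)) 0 0) := by
  letI := (posdef_blk hC).isUnit.invertible
  have h1 : C.det = (fromBlocks (blk C) (colv C) (colv C)ᴴ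
      (of fun _ _ => C (Fin.last q) (Fin.last q))).det := by
    rw [← submatrix_e hC.1, det_submatrix_equiv_self]
  rw [h1, det_fromBlocks₁₁, invOf_eq_nonsing_inv, det_fin_one]
  simp [Matrix.sub_apply]

lemma psd_N {C : Matrix (Fin (q+1)) (Fin (q+1)) ℂ} (hC : C.PosDef) :
    (fromBlocks (blk C) (colv C) (colv C)ᴴ ((colv C)ᴴ * (blk C)⁻¹ * (colv C))).PosSemidef := by
  letI := (posdef_blk hC).isUnit.invertible
  rw [PosDef.fromBlocks₁₁ _ _ (posdef_blk hC)]
  simpa using Matrix.PosSemidef.zero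

end Kernel
section Kernel2

variable {q : ℕ}

lemma entry_quad (M : Matrix (Fin q) (Fin q) ℂ) (c : Matrix (Fin q) (Fin 1) ℂ) :
    (cᴴ * M * c) 0 0 = star (fun i => c i 0) ⬝ᵥ M *ᵥ (fun i => c i 0) := by
  simp only [Matrix.mul_apply, conjTranspose_apply, dotProduct, mulVec, Pi.star_apply,
    Finset.sum_mul, Finset.mul_sum]
  rw [Finset.sum_comm]
  exact Finset.sum_congr rfl fun i _ => Finset.sum_congr rfl fun j _ => by ring

lemma psd_diag_nonneg {k : Type*} [Fintype k] [DecidableEq k] {M : Matrix k k ℂ}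
    (h : M.PosSemidef) (i : k) : 0 ≤ M i i := by
  have := h.dotProduct_mulVec_nonneg (Pi.single i 1)
  simpa [dotProduct, mulVec, Pi.single_apply] using this

lemma s_nonneg {C : Matrix (Fin (q+1)) (Fin (q+1)) ℂ} (hC : C.PosDef) :
    0 ≤ ((colv C)ᴴ * (blk C)⁻¹ * (colv C)) 0 0 := by
  rw [entry_quad]
  exact ((posdef_blk hC).inv.posSemidef).dotProduct_mulVec_nonneg _

lemma key_ineq {A B : Matrix (Fin (q+1)) (Fin (q+1)) ℂ} (hA : A.PosDef) (hB : B.PosDef) :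
    0 ≤ ((colv A)ᴴ * (blk A)⁻¹ * (colv A)) 0 0 * (((colv B)ᴴ * (blk B)⁻¹ * (colv B)) 0 0)
        - ((Matrix.hadamard (colv A) (colv B))ᴴ * (Matrix.hadamard (blk A) (blk B))⁻¹
            * (Matrix.hadamard (colv A) (colv B))) 0 0 := by
  have hN := posSemidef_hadamardC (psd_N hA) (psd_N hB)
  have hfb : Matrix.hadamard
        (fromBlocks (blk A) (colv A) (colv A)ᴴ ((colv A)ᴴ * (blk A)⁻¹ * (colv A)))
        (fromBlocks (blk B) (colv B) (colv B)ᴴ ((colv B)ᴴ * (blk B)⁻¹ * (colv B)))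
      = fromBlocks (Matrix.hadamard (blk A) (blk B)) (Matrix.hadamard (colv A) (colv B))
          (Matrix.hadamard (colv A) (colv B))ᴴ
          (Matrix.hadamard ((colv A)ᴴ * (blk A)⁻¹ * (colv A))
            ((colv B)ᴴ * (blk B)⁻¹ * (colv B))) := by
    ext i j
    rcases i with i | i <;> rcases j with j | j
    · rfl
    · rfl
    · simp only [Matrix.hadamard_apply, fromBlocks_apply₂₁, conjTranspose_apply, star_mul']
    · rfl
  rw [hfb] at hN
  have hPD : (Matrix.hadamard (blk A) (blk B)).PosDef :=
    posDef_hadamardC (posdef_blk hA) (posdef_blk hB)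
  letI := hPD.isUnit.invertible
  rw [Matrix.PosDef.fromBlocks₁₁ _ _ hPD] at hN
  have := psd_diag_nonneg hN 0
  simpa [Matrix.sub_apply, Matrix.hadamard_apply] using this

end Kernel2

set_option maxHeartbeats 1600000 in
theorem kernel {q : ℕ} (A B : Matrix (Fin (q+1)) (Fin (q+1)) ℂ)
    (hA : A.PosDef) (hB : B.PosDef) :
    (Matrix.hadamard A B).det.re / (Matrix.hadamard (blk A) (blk B)).det.re
      + (A * B).det.re / (blk A * blk B).det.re
    ≥ (A (Fin.last q) (Fin.last q)).re * B.det.re / (blk B).det.re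
      + (B (Fin.last q) (Fin.last q)).re * A.det.re / (blk A).det.re := by
  set sa : ℂ := ((colv A)ᴴ * (blk A)⁻¹ * (colv A)) 0 0 with hsa_def
  set sb : ℂ := ((colv B)ᴴ * (blk B)⁻¹ * (colv B)) 0 0 with hsb_def
  set wc : ℂ := ((Matrix.hadamard (colv A) (colv B))ᴴ * (Matrix.hadamard (blk A) (blk B))⁻¹
      * (Matrix.hadamard (colv A) (colv B))) 0 0 with hwc_def
  have hsa := Complex.nonneg_iff.mp (s_nonneg hA)
  have hsb := Complex.nonneg_iff.mp (s_nonneg hB)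
  have hkey := Complex.nonneg_iff.mp (key_ineq hA hB)
  have pA := Complex.lt_def.mp (posdef_blk hA).det_pos
  have pB := Complex.lt_def.mp (posdef_blk hB).det_pos
  have pH := Complex.lt_def.mp (posDef_hadamardC (posdef_blk hA) (posdef_blk hB)).det_pos
  have pAf := Complex.lt_def.mp hA.det_pos
  have pBf := Complex.lt_def.mp hB.det_pos
  have iA : (blk A).det.im = 0 := by simpa using pA.2.symm
  have iB : (blk B).det.im = 0 := by simpa using pB.2.symm
  have iH : (Matrix.hadamard (blk A) (blk B)).det.im = 0 := by simpa using pH.2.symm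
  have iAf : A.det.im = 0 := by simpa using pAf.2.symm
  have iBf : B.det.im = 0 := by simpa using pBf.2.symm
  have haa : (A (Fin.last q) (Fin.last q)).im = 0 :=
    Complex.conj_eq_iff_im.mp (hA.1.apply _ _)
  have hbb : (B (Fin.last q) (Fin.last q)).im = 0 :=
    Complex.conj_eq_iff_im.mp (hB.1.apply _ _)
  -- real identities
  have EA : A.det.re = (blk A).det.re * ((A (Fin.last q) (Fin.last q)).re - sa.re) := by
    rw [det_decomp hA, ← hsa_def]
    simp [Complex.mul_re, Complex.sub_re, iA]
  have EB : B.det.re = (blk B).det.re * ((B (Fin.last q) (Fin.last q)).re - sb.re) := by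
    rw [det_decomp hB, ← hsb_def]
    simp [Complex.mul_re, Complex.sub_re, iB]
  have EH : (Matrix.hadamard A B).det.re
      = (Matrix.hadamard (blk A) (blk B)).det.re
        * ((A (Fin.last q) (Fin.last q)).re * (B (Fin.last q) (Fin.last q)).re - wc.re) := by
    have EH0 := det_decomp (posDef_hadamardC hA hB)
    have hblk : blk (Matrix.hadamard A B) = Matrix.hadamard (blk A) (blk B) := rfl
    have hcolv : colv (Matrix.hadamard A B) = Matrix.hadamard (colv A) (colv B) := rfl
    have hll : (Matrix.hadamard A B) (Fin.last q) (Fin.last q)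
        = A (Fin.last q) (Fin.last q) * B (Fin.last q) (Fin.last q) := rfl
    rw [hblk, hcolv, hll] at EH0
    rw [EH0, ← hwc_def]
    simp [Complex.mul_re, Complex.sub_re, Complex.sub_im, iH, haa, hbb]
  have EAB : (A * B).det.re = A.det.re * B.det.re := by
    rw [Matrix.det_mul]
    simp [Complex.mul_re, iAf]
  have EAB' : (blk A * blk B).det.re = (blk A).det.re * (blk B).det.re := by
    rw [Matrix.det_mul]
    simp [Complex.mul_re, iA]
  have hw : wc.re ≤ sa.re * sb.re := by
    have h0 := hkey.1
    rw [Complex.sub_re, Complex.mul_re, ← hsa.2] at h0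
    simp at h0
    linarith
  have hα : (blk A).det.re ≠ 0 := ne_of_gt (by simpa using pA.1)
  have hβ : (blk B).det.re ≠ 0 := ne_of_gt (by simpa using pB.1)
  have hγ : (Matrix.hadamard (blk A) (blk B)).det.re ≠ 0 := ne_of_gt (by simpa using pH.1)
  rw [EH, EAB, EAB', EA, EB]
  set aa := (A (Fin.last q) (Fin.last q)).re
  set bb := (B (Fin.last q) (Fin.last q)).re
  set α := (blk A).det.re
  set β := (blk B).det.re
  set γ := (Matrix.hadamard (blk A) (blk B)).det.re
  have e1 : γ * (aa * bb - wc.re) / γ = aa * bb - wc.re := mul_div_cancel_left₀ _ hγ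
  have e2 : α * (aa - sa.re) * (β * (bb - sb.re)) / (α * β)
      = (aa - sa.re) * (bb - sb.re) := by field_simp
  have e3 : aa * (β * (bb - sb.re)) / β = aa * (bb - sb.re) := by field_simp
  have e4 : bb * (α * (aa - sa.re)) / α = bb * (aa - sa.re) := by field_simp
  rw [e1, e2, e3, e4]
  nlinarith [hw]

/-- **Lemma 2.1.** For `n × n` positive definite matrices `A, B` and `2 ≤ p ≤ n`,
`det(A_p ∘ B_p)/det(A_{p-1} ∘ B_{p-1}) + det(A_p B_p)/det(A_{p-1} B_{p-1}) ≥
 a_{pp} det B_p/det B_{p-1} + b_{pp} det A_p/det A_{p-1}`. -/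
theorem lemma21_scalar {n : ℕ} (A B : Matrix (Fin n) (Fin n) ℂ)
    (hA : A.PosDef) (hB : B.PosDef) (p : ℕ) (hp2 : 2 ≤ p) (hpn : p ≤ n) :
    (Matrix.hadamard (leadSub A p hpn) (leadSub B p hpn)).det.re /
        (Matrix.hadamard (leadSub A (p - 1) (by omega)) (leadSub B (p - 1) (by omega))).det.re +
      (leadSub A p hpn * leadSub B p hpn).det.re /
        (leadSub A (p - 1) (by omega) * leadSub B (p - 1) (by omega)).det.re ≥
    (A ⟨p - 1, by omega⟩ ⟨p - 1, by omega⟩).re *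
        (leadSub B p hpn).det.re / (leadSub B (p - 1) (by omega)).det.re +
      (B ⟨p - 1, by omega⟩ ⟨p - 1, by omega⟩).re *
        (leadSub A p hpn).det.re / (leadSub A (p - 1) (by omega)).det.re := by
  obtain ⟨q, rfl⟩ : ∃ q, p = q + 1 := ⟨p - 1, by omega⟩
  have hA' : (leadSub A (q+1) hpn).PosDef :=
    posDef_submatrixC hA _ (Fin.castLE_injective hpn)
  have hB' : (leadSub B (q+1) hpn).PosDef :=
    posDef_submatrixC hB _ (Fin.castLE_injective hpn)
  exact kernel (leadSub A (q+1) hpn) (leadSub B (q+1) hpn) hA' hB'
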